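/- arXiv:2012.05004 — 3 statements merged into one kernel-verified Lean document; each statement's English description precedes it below -/
import Mathlib

section
/- Let R be a commutative ring equipped with a star operation (StarRing R), F an m×p matrix, H a p×m matrix, and Φv an m×m matrix over R. Suppose I − F·H is invertible with inverse P and I − H·F is invertible with inverse Q, set Φ₁₁ = P·Φv·Pᴴ and Φ₂₁ = Q·H·Φv·Pᴴ (the blocks obtained when the input-noise spectrum Φr is zero), and suppose Φ₁₁ is invertible. Then H = Φ₂₁·Φ₁₁⁻¹. -/
open Matrix

theorem H_eq_phi21_mul_phi11_inv {R : Type*} [CommRing R] [StarRing R] {m p : ℕ}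
    (F : Matrix (Fin m) (Fin p) R) (H : Matrix (Fin p) (Fin m) R)
    (Φv : Matrix (Fin m) (Fin m) R)
    (P : Matrix (Fin m) (Fin m) R) (Q : Matrix (Fin p) (Fin p) R)
    (hP₁ : (1 - F * H) * P = 1) (hP₂ : P * (1 - F * H) = 1)
    (hQ₁ : (1 - H * F) * Q = 1) (hQ₂ : Q * (1 - H * F) = 1)
    (Φ₁₁ : Matrix (Fin m) (Fin m) R) (Φ₂₁ : Matrix (Fin p) (Fin m) R)
    (hΦ₁₁ : Φ₁₁ = P * Φv * Pᴴ)
    (hΦ₂₁ : Φ₂₁ = Q * H * Φv * Pᴴ)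
    (hunit : IsUnit Φ₁₁) :
    H = Φ₂₁ * Φ₁₁⁻¹ := by
  have hcomm : H * (1 - F * H) = (1 - H * F) * H := by
    simp [Matrix.mul_sub, Matrix.sub_mul, Matrix.mul_assoc]
  have hQH : Q * H = H * P := by
    calc Q * H = Q * (H * ((1 - F * H) * P)) := by rw [hP₁, Matrix.mul_one]
    _ = Q * ((1 - H * F) * (H * P)) := by
        rw [← Matrix.mul_assoc H, hcomm, Matrix.mul_assoc]
    _ = H * P := by rw [← Matrix.mul_assoc, hQ₂, Matrix.one_mul]
  have h21 : Φ₂₁ = H * Φ₁₁ := by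
    rw [hΦ₂₁, hΦ₁₁, Matrix.mul_assoc (Q * H), hQH]
    simp [Matrix.mul_assoc]
  rw [h21, Matrix.mul_assoc, Matrix.mul_nonsing_inv _ ((Matrix.isUnit_iff_isUnit_det _).mp hunit), Matrix.mul_one]
end

section
/- Let R be a commutative ring equipped with a star operation (StarRing R), F an m×p matrix, H a p×m matrix, Φv an m×m matrix and Φr a p×p matrix over R. Suppose I − F·H is invertible with inverse P and I − H·F is invertible with inverse Q, set Φ₁₁ = P·(Φv + F·Φr·Fᴴ)·Pᴴ and Φ₂₁ = Q·(H·Φv + Φr·Fᴴ)·Pᴴ, suppose Φ₁₁ is invertible, and suppose H = Φ₂₁·Φ₁₁⁻¹. Then Φr·Fᴴ = 0. -/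
open Matrix

theorem phir_mul_Fstar_eq_zero {R : Type*} [CommRing R] [StarRing R] {m p : ℕ}
    (F : Matrix (Fin m) (Fin p) R) (H : Matrix (Fin p) (Fin m) R)
    (Φv : Matrix (Fin m) (Fin m) R) (Φr : Matrix (Fin p) (Fin p) R)
    (P : Matrix (Fin m) (Fin m) R) (Q : Matrix (Fin p) (Fin p) R)
    (hP₁ : (1 - F * H) * P = 1) (hP₂ : P * (1 - F * H) = 1)
    (hQ₁ : (1 - H * F) * Q = 1) (hQ₂ : Q * (1 - H * F) = 1)
    (Φ₁₁ : Matrix (Fin m) (Fin m) R) (Φ₂₁ : Matrix (Fin p) (Fin m) R)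
    (hΦ₁₁ : Φ₁₁ = P * (Φv + F * Φr * Fᴴ) * Pᴴ)
    (hΦ₂₁ : Φ₂₁ = Q * (H * Φv + Φr * Fᴴ) * Pᴴ)
    (hunit : IsUnit Φ₁₁)
    (hH : H = Φ₂₁ * Φ₁₁⁻¹) :
    Φr * Fᴴ = 0 := by
  -- Pᴴ has a right inverse (1 - F*H)ᴴ
  have hPH : Pᴴ * (1 - F * H)ᴴ = 1 := by
    rw [← conjTranspose_mul, hP₁, conjTranspose_one]
  -- H * P = Q * H
  have hHP : H * P = Q * H := by
    have h1 : H * (1 - F * H) = (1 - H * F) * H := by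
      rw [Matrix.mul_sub, Matrix.sub_mul, Matrix.mul_one, Matrix.one_mul,
        Matrix.mul_assoc]
    calc H * P = (Q * (1 - H * F)) * (H * P) := by rw [hQ₂, Matrix.one_mul]
      _ = Q * ((1 - H * F) * H) * P := by
          rw [Matrix.mul_assoc Q, Matrix.mul_assoc Q, Matrix.mul_assoc]
      _ = Q * (H * (1 - F * H)) * P := by rw [h1]
      _ = Q * H * ((1 - F * H) * P) := by
          rw [Matrix.mul_assoc Q, Matrix.mul_assoc Q, Matrix.mul_assoc]
      _ = Q * H := by rw [hP₁, Matrix.mul_one]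
  -- H * Φ₁₁ = Φ₂₁
  have hkey : H * Φ₁₁ = Φ₂₁ := by
    rw [hH, Matrix.mul_assoc, Matrix.nonsing_inv_mul Φ₁₁
      ((Matrix.isUnit_iff_isUnit_det Φ₁₁).mp hunit), Matrix.mul_one]
  rw [hΦ₁₁, hΦ₂₁] at hkey
  -- cancel Pᴴ on the right
  have h2 : H * P * (Φv + F * Φr * Fᴴ) = Q * (H * Φv + Φr * Fᴴ) := by
    have e := congrArg (fun X => X * (1 - F * H)ᴴ) hkey
    simp only [Matrix.mul_assoc, hPH, Matrix.mul_one] at e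
    rw [← Matrix.mul_assoc, ← Matrix.mul_assoc] at e
    exact e
  rw [hHP] at h2
  -- extract the result
  have h3 : Q * ((1 - H * F) * (Φr * Fᴴ)) = 0 := by
    have e : Q * (H * Φv + Φr * Fᴴ) - Q * H * (Φv + F * Φr * Fᴴ) =
        Q * ((1 - H * F) * (Φr * Fᴴ)) := by
      simp only [Matrix.mul_add, Matrix.mul_sub, Matrix.sub_mul,
        Matrix.one_mul, Matrix.mul_assoc]
      abel
    rw [← e, h2, sub_self]
  rwa [← Matrix.mul_assoc, hQ₂, Matrix.one_mul] at h3
end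

section
/- Let K be a field, A a p×m matrix, B a p×p matrix, Φ₁₁ an invertible m×m matrix and Φ₂₁ a p×m matrix over K. Suppose the p×(m+p) matrix [A B] (columns of A followed by columns of B) has rank p, and suppose A·Φ₁₁ + B·Φ₂₁ = 0. Then B is invertible. -/
open Matrix

lemma isUnit_of_rank_eq {K : Type*} [Field K] {p : ℕ} (B : Matrix (Fin p) (Fin p) K)
    (h : B.rank = p) : IsUnit B := by
  rw [← Matrix.mulVec_surjective_iff_isUnit]
  have hr : LinearMap.range B.mulVecLin = ⊤ := by
    apply Submodule.eq_top_of_finrank_eq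
    rw [← Matrix.rank, h]
    simp [Module.finrank_pi]
  intro y
  have := hr ▸ Submodule.mem_top (x := y) (R := K)
  obtain ⟨x, hx⟩ := this
  exact ⟨x, hx⟩

theorem isUnit_B_of_annihilator {K : Type*} [Field K] {m p : ℕ}
    (A : Matrix (Fin p) (Fin m) K) (B : Matrix (Fin p) (Fin p) K)
    (Φ₁₁ : Matrix (Fin m) (Fin m) K) (Φ₂₁ : Matrix (Fin p) (Fin m) K)
    (hΦ₁₁ : IsUnit Φ₁₁)
    (hrank : (Matrix.fromCols A B).rank = p)
    (hann : A * Φ₁₁ + B * Φ₂₁ = 0) :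
    IsUnit B := by
  have hΦdet : IsUnit Φ₁₁.det := (Matrix.isUnit_iff_isUnit_det _).mp hΦ₁₁
  have hA : A = B * (-(Φ₂₁ * Φ₁₁⁻¹)) := by
    have h1 : A * Φ₁₁ = -(B * Φ₂₁) := by linear_combination (norm := noncomm_ring) hann
    calc A = A * Φ₁₁ * Φ₁₁⁻¹ := by
            rw [Matrix.mul_assoc, Matrix.mul_nonsing_inv _ hΦdet, Matrix.mul_one]
    _ = -(B * Φ₂₁) * Φ₁₁⁻¹ := by rw [h1]
    _ = B * (-(Φ₂₁ * Φ₁₁⁻¹)) := by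
            rw [Matrix.neg_mul, Matrix.mul_assoc, Matrix.mul_neg]
  have hfac : fromCols A B = B * fromCols (-(Φ₂₁ * Φ₁₁⁻¹)) 1 := by
    rw [Matrix.mul_fromCols, mul_one, ← hA]
  have hle : (fromCols A B).rank ≤ B.rank := by
    rw [hfac]; exact Matrix.rank_mul_le_left _ _
  have : p ≤ B.rank := hrank.symm.trans_le hle
  exact isUnit_of_rank_eq B (le_antisymm (Matrix.rank_le_card_height B |>.trans (by simp)) this)
end
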